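/- arXiv:1301.4309 — 2 statements merged into one kernel-verified Lean document; each statement's English description precedes it below -/
import Mathlib

section
/- Let N ∈ S^m be a fixed unit vector and let Λ₀ be a nonempty compact subset of the equator {y ∈ S^m : ⟨y, N⟩ = 0}, and let f : Λ₀ → ℝ be 1-Lipschitz. If there exists a point x ∈ S^m with ⟨x, N⟩ > 0 such that f⁺(x) = f⁻(x), then Λ₀ is purely lightlike: there exists x₀ ∈ Λ₀ with −x₀ ∈ Λ₀ and f(x₀) = f(−x₀) + π. -/
open scoped RealInnerProductSpace
open Real

/-- Spherical (geodesic) distance between unit vectors of a Euclidean space: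
`d(x,y) = arccos⟨x,y⟩`. -/
noncomputable def sphDist {m : ℕ} (x y : EuclideanSpace ℝ (Fin m)) : ℝ :=
  Real.arccos ⟪x, y⟫

/-- `f⁻(x) = sup_{y ∈ Λ₀} (f(y) − d(x,y))`. -/
noncomputable def fminus {m : ℕ} (Λ₀ : Set (EuclideanSpace ℝ (Fin m)))
    (f : EuclideanSpace ℝ (Fin m) → ℝ) (x : EuclideanSpace ℝ (Fin m)) : ℝ :=
  sSup ((fun y => f y - sphDist x y) '' Λ₀)

/-- `f⁺(x) = inf_{y ∈ Λ₀} (f(y) + d(x,y))`. -/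
noncomputable def fplus {m : ℕ} (Λ₀ : Set (EuclideanSpace ℝ (Fin m)))
    (f : EuclideanSpace ℝ (Fin m) → ℝ) (x : EuclideanSpace ℝ (Fin m)) : ℝ :=
  sInf ((fun y => f y + sphDist x y) '' Λ₀)


set_option maxHeartbeats 1000000 in
/-- Core strict inequality: for `0<t<1`, `a²≤1`, `b²≤1`, `0 < a+b`,
`t²ab − √(1−t²a²)√(1−t²b²) < ab − √(1−a²)√(1−b²)`. -/
lemma core2 (t a b : ℝ) (ht0 : 0 < t) (ht1 : t < 1) (ha : a^2 ≤ 1) (hb : b^2 ≤ 1)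
    (hab : 0 < a + b) :
    (t*a)*(t*b) - Real.sqrt (1-(t*a)^2) * Real.sqrt (1-(t*b)^2)
      < a*b - Real.sqrt (1-a^2) * Real.sqrt (1-b^2) := by
  have ht2 : t^2 < 1 := by nlinarith
  have h1a : (0:ℝ) ≤ 1 - a^2 := by linarith
  have h1b : (0:ℝ) ≤ 1 - b^2 := by linarith
  have h1ta : (0:ℝ) ≤ 1 - (t*a)^2 := by nlinarith [sq_nonneg a]
  have h1tb : (0:ℝ) ≤ 1 - (t*b)^2 := by nlinarith [sq_nonneg b]
  rcases lt_trichotomy (a*b) 0 with hP | hP | hP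
  · -- a*b < 0 : square comparison
    have hu : 0 < a^2 := by nlinarith
    have hv : 0 < b^2 := by nlinarith
    have huv : a^2 ≠ b^2 := by
      intro h
      have : |a| = |b| := by
        have := abs_nonneg a; have := abs_nonneg b
        nlinarith [sq_abs a, sq_abs b]
      rcases abs_eq_abs.mp this with h' | h'
      · nlinarith
      · nlinarith
    set Y := Real.sqrt (1-a^2) * Real.sqrt (1-b^2) with hY
    set X := Real.sqrt (1-(t*a)^2) * Real.sqrt (1-(t*b)^2) with hX
    have hYnn : 0 ≤ Y := mul_nonneg (Real.sqrt_nonneg _) (Real.sqrt_nonneg _)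
    have hXnn : 0 ≤ X := mul_nonneg (Real.sqrt_nonneg _) (Real.sqrt_nonneg _)
    have hY2 : Y^2 = (1-a^2)*(1-b^2) := by
      rw [hY, mul_pow, Real.sq_sqrt h1a, Real.sq_sqrt h1b]
    have hX2 : X^2 = (1-(t*a)^2)*(1-(t*b)^2) := by
      rw [hX, mul_pow, Real.sq_sqrt h1ta, Real.sq_sqrt h1tb]
    set L := (1-t^2) * (-(a*b)) with hL
    have hLpos : 0 < L := by
      apply mul_pos <;> linarith
    -- p, q
    set p := Real.sqrt (a^2) * Real.sqrt (1-b^2) with hp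
    set q := Real.sqrt (b^2) * Real.sqrt (1-a^2) with hq
    have hp2 : p^2 = a^2*(1-b^2) := by
      rw [hp, mul_pow, Real.sq_sqrt (sq_nonneg a), Real.sq_sqrt h1b]
    have hq2 : q^2 = b^2*(1-a^2) := by
      rw [hq, mul_pow, Real.sq_sqrt (sq_nonneg b), Real.sq_sqrt h1a]
    have hpq : p ≠ q := by
      intro h
      apply huv
      have : p^2 = q^2 := by rw [h]
      rw [hp2, hq2] at this
      ring_nf at this ⊢
      linarith
    have hamgm : 2*(p*q) < a^2*(1-b^2) + b^2*(1-a^2) := by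
      have hne : p - q ≠ 0 := sub_ne_zero.mpr hpq
      have hpos : 0 < (p - q)^2 := sq_pos_of_ne_zero hne
      have hexp : (p - q)^2 = p^2 - 2*(p*q) + q^2 := by ring
      rw [hexp, hp2, hq2] at hpos
      linarith
    -- relate Y*L to p*q
    have habs : -(a*b) = Real.sqrt (a^2) * Real.sqrt (b^2) := by
      rw [Real.sqrt_sq_eq_abs, Real.sqrt_sq_eq_abs, ← abs_mul]
      rw [abs_of_neg hP]
    have hYL : Y * L = (1-t^2) * (p*q) := by
      rw [hY, hL, habs, hp, hq]; ring
    have hsq : (Y + L)^2 < X^2 := by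
      have expand : (Y+L)^2 = Y^2 + 2*(Y*L) + L^2 := by ring
      rw [expand, hY2, hX2, hYL, hL, habs]
      have hab2 : ((1-t^2) * (Real.sqrt (a^2) * Real.sqrt (b^2)))^2
          = (1-t^2)^2 * (a^2*b^2) := by
        rw [mul_pow, mul_pow, Real.sq_sqrt (sq_nonneg a), Real.sq_sqrt (sq_nonneg b)]
      rw [hab2]
      have hm : (1-t^2) * (2*(p*q)) < (1-t^2) * (a^2*(1-b^2) + b^2*(1-a^2)) :=
        mul_lt_mul_of_pos_left hamgm (by linarith)
      have key : (1-a^2)*(1-b^2) + (1-t^2)*(a^2*(1-b^2) + b^2*(1-a^2))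
          + (1-t^2)^2 * (a^2*b^2) = (1-(t*a)^2)*(1-(t*b)^2) := by ring
      linarith
    have : Y + L < X := by
      have := lt_of_pow_lt_pow_left₀ 2 hXnn hsq
      exact this
    rw [hL] at this
    ring_nf at this ⊢
    linarith
  · -- a*b = 0
    rcases mul_eq_zero.mp hP with h0 | h0
    · have hbpos : 0 < b := by rw [h0] at hab; linarith
      rw [h0]
      simp only [mul_zero, zero_mul, zero_sub, sub_zero]
      have h1 : Real.sqrt (1-(0:ℝ)^2) = 1 := by norm_num
      have h2 : Real.sqrt (1-(t*0)^2) = 1 := by norm_num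
      rw [h1, h2, one_mul, one_mul] at *
      have : Real.sqrt (1-b^2) < Real.sqrt (1-(t*b)^2) := by
        apply Real.sqrt_lt_sqrt h1b
        have hb2 : 0 < b^2 := by positivity
        have : t^2*b^2 < 1*b^2 := mul_lt_mul_of_pos_right ht2 hb2
        nlinarith
      linarith
    · have hapos : 0 < a := by rw [h0] at hab; linarith
      rw [h0]
      simp only [mul_zero, zero_mul, zero_sub, sub_zero]
      have h1 : Real.sqrt (1-(0:ℝ)^2) = 1 := by norm_num
      have h2 : Real.sqrt (1-(t*0)^2) = 1 := by norm_num
      rw [h1, h2, mul_one, mul_one] at *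
      have : Real.sqrt (1-a^2) < Real.sqrt (1-(t*a)^2) := by
        apply Real.sqrt_lt_sqrt h1a
        have ha2 : 0 < a^2 := by positivity
        have : t^2*a^2 < 1*a^2 := mul_lt_mul_of_pos_right ht2 ha2
        nlinarith
      linarith
  · -- a*b > 0
    have hle : Real.sqrt (1-a^2) * Real.sqrt (1-b^2)
        ≤ Real.sqrt (1-(t*a)^2) * Real.sqrt (1-(t*b)^2) := by
      apply mul_le_mul
      · apply Real.sqrt_le_sqrt; nlinarith [sq_nonneg a]
      · apply Real.sqrt_le_sqrt; nlinarith [sq_nonneg b]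
      · exact Real.sqrt_nonneg _
      · exact Real.sqrt_nonneg _
    have h3 : (t*a)*(t*b) = t^2*(a*b) := by ring
    have h4 : t^2*(a*b) < 1*(a*b) := mul_lt_mul_of_pos_right ht2 hP
    linarith

set_option maxHeartbeats 1000000 in
/-- arccos-level core lemma. -/
lemma core (t a b c : ℝ) (ht0 : 0 < t) (ht1 : t < 1) (ha : a^2 ≤ 1) (hb : b^2 ≤ 1)
    (hc1 : -1 ≤ c) (hc2 : c ≤ 1)
    (hcs : a*b - Real.sqrt (1-a^2) * Real.sqrt (1-b^2) ≤ c)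
    (hsum : arccos (t*a) + arccos (t*b) ≤ arccos c) : c = -1 := by
  have ht2 : t^2 ≤ 1 := by nlinarith
  have hta1 : -1 ≤ t*a := by nlinarith [sq_nonneg (t*a+1), sq_nonneg (t-a), sq_nonneg (t+a)]
  have hta2 : t*a ≤ 1 := by nlinarith [sq_nonneg (t*a-1), sq_nonneg (t-a), sq_nonneg (t+a)]
  have htb1 : -1 ≤ t*b := by nlinarith [sq_nonneg (t*b+1), sq_nonneg (t-b), sq_nonneg (t+b)]
  have htb2 : t*b ≤ 1 := by nlinarith [sq_nonneg (t*b-1), sq_nonneg (t-b), sq_nonneg (t+b)]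
  suffices hpi : π ≤ arccos (t*a) + arccos (t*b) by
    have h1 : arccos c = π := le_antisymm (arccos_le_pi c) (le_trans hpi hsum)
    have h2 : c ≤ -1 := arccos_eq_pi.mp h1
    linarith
  by_contra hlt
  push_neg at hlt
  -- a + b > 0
  have hab : 0 < a + b := by
    by_contra hab'
    push_neg at hab'
    have h3 : t*a ≤ -(t*b) := by nlinarith
    have h4 : arccos (-(t*b)) ≤ arccos (t*a) := by
      rw [Real.arccos_eq_pi_div_two_sub_arcsin, Real.arccos_eq_pi_div_two_sub_arcsin]
      linarith [Real.monotone_arcsin h3]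
    rw [arccos_neg] at h4
    linarith
  -- c ≤ cos (A + B)
  have h5 : Real.cos (arccos c) ≤ Real.cos (arccos (t*a) + arccos (t*b)) := by
    apply Real.cos_le_cos_of_nonneg_of_le_pi
    · exact add_nonneg (arccos_nonneg _) (arccos_nonneg _)
    · exact arccos_le_pi c
    · exact hsum
  rw [Real.cos_arccos hc1 hc2, Real.cos_add, Real.cos_arccos hta1 hta2,
      Real.cos_arccos htb1 htb2, Real.sin_arccos, Real.sin_arccos] at h5
  have := core2 t a b ht0 ht1 ha hb hab
  linarith

set_option maxHeartbeats 1000000 in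
/-- Cauchy–Schwarz-type bound in the complement of a unit vector `e`. -/
lemma geomCS {n : ℕ} (e y z : EuclideanSpace ℝ (Fin n)) (he : ‖e‖ = 1)
    (hy : ‖y‖ = 1) (hz : ‖z‖ = 1) :
    ⟪e,y⟫ * ⟪e,z⟫ - Real.sqrt (1-⟪e,y⟫^2) * Real.sqrt (1-⟪e,z⟫^2) ≤ ⟪y,z⟫ := by
  have hy' : ‖y - ⟪e,y⟫ • e‖^2 = 1 - ⟪e,y⟫^2 := by
    rw [norm_sub_sq_real, real_inner_smul_right, norm_smul, hy, he, real_inner_comm y e]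
    simp [abs_mul_abs_self]
    ring
  have hz' : ‖z - ⟪e,z⟫ • e‖^2 = 1 - ⟪e,z⟫^2 := by
    rw [norm_sub_sq_real, real_inner_smul_right, norm_smul, hz, he, real_inner_comm z e]
    simp [abs_mul_abs_self]
    ring
  have hyn : Real.sqrt (1-⟪e,y⟫^2) = ‖y - ⟪e,y⟫ • e‖ := by
    rw [← hy', Real.sqrt_sq (norm_nonneg _)]
  have hzn : Real.sqrt (1-⟪e,z⟫^2) = ‖z - ⟪e,z⟫ • e‖ := by
    rw [← hz', Real.sqrt_sq (norm_nonneg _)]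
  have hinner : ⟪y - ⟪e,y⟫ • e, z - ⟪e,z⟫ • e⟫ = ⟪y,z⟫ - ⟪e,y⟫*⟪e,z⟫ := by
    simp only [inner_sub_left, inner_sub_right, real_inner_smul_left, real_inner_smul_right,
      real_inner_self_eq_norm_sq, he, real_inner_comm y e, real_inner_comm z e]
    ring
  have hlow := (abs_le.mp (abs_real_inner_le_norm (y - ⟪e,y⟫ • e) (z - ⟪e,z⟫ • e))).1
  rw [hinner] at hlow
  rw [hyn, hzn]
  linarith

lemma geom {n : ℕ} (N x y z : EuclideanSpace ℝ (Fin n)) (hN : ‖N‖ = 1) (hx : ‖x‖ = 1)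
    (hy : ‖y‖ = 1) (hz : ‖z‖ = 1) (hyN : ⟪y, N⟫ = 0) (hzN : ⟪z, N⟫ = 0)
    (hxN : 0 < ⟪x, N⟫)
    (hsum : arccos ⟪x, y⟫ + arccos ⟪x, z⟫ ≤ arccos ⟪y, z⟫) : ⟪y, z⟫ = -1 := by
  have hc1 : -1 ≤ ⟪y, z⟫ := by
    have h := abs_real_inner_le_norm y z
    rw [hy, hz] at h
    exact (abs_le.mp (by simpa using h)).1
  have hc2 : ⟪y, z⟫ ≤ 1 := by
    have h := abs_real_inner_le_norm y z
    rw [hy, hz] at h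
    exact (abs_le.mp (by simpa using h)).2
  have hNy : ⟪N, y⟫ = 0 := by rw [real_inner_comm]; exact hyN
  have hNz : ⟪N, z⟫ = 0 := by rw [real_inner_comm]; exact hzN
  have hvy : ⟪x - ⟪x,N⟫ • N, y⟫ = ⟪x, y⟫ := by
    rw [inner_sub_left, real_inner_smul_left, hNy]; ring
  have hvz : ⟪x - ⟪x,N⟫ • N, z⟫ = ⟪x, z⟫ := by
    rw [inner_sub_left, real_inner_smul_left, hNz]; ring
  have hs1 : ⟪x,N⟫ ≤ 1 := by
    have h := real_inner_le_norm x N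
    rw [hx, hN] at h; simpa using h
  have hvsq : ‖x - ⟪x,N⟫ • N‖^2 = 1 - ⟪x,N⟫^2 := by
    rw [norm_sub_sq_real, real_inner_smul_right, norm_smul, hx, hN]
    simp [abs_mul_abs_self]
    ring
  by_cases hv0 : x - ⟪x,N⟫ • N = 0
  · have hxy0 : ⟪x, y⟫ = 0 := by rw [← hvy, hv0, inner_zero_left]
    have hxz0 : ⟪x, z⟫ = 0 := by rw [← hvz, hv0, inner_zero_left]
    rw [hxy0, hxz0, Real.arccos_zero] at hsum
    have hpi : arccos ⟪y, z⟫ = π := le_antisymm (arccos_le_pi _) (by linarith)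
    have := Real.arccos_eq_pi.mp hpi
    linarith
  · have ht0 : 0 < ‖x - ⟪x,N⟫ • N‖ := norm_pos_iff.mpr hv0
    have ht1 : ‖x - ⟪x,N⟫ • N‖ < 1 := by
      by_contra h
      push_neg at h
      nlinarith
    have hev : ‖x - ⟪x,N⟫ • N‖ • (‖x - ⟪x,N⟫ • N‖⁻¹ • (x - ⟪x,N⟫ • N)) = x - ⟪x,N⟫ • N := by
      rw [smul_smul, mul_inv_cancel₀ (ne_of_gt ht0), one_smul]
    have hea : ‖(‖x - ⟪x,N⟫ • N‖⁻¹ • (x - ⟪x,N⟫ • N))‖ = 1 := by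
      rw [norm_smul, norm_inv, norm_norm, inv_mul_cancel₀ (ne_of_gt ht0)]
    set e := ‖x - ⟪x,N⟫ • N‖⁻¹ • (x - ⟪x,N⟫ • N) with he
    have hxya : ⟪x, y⟫ = ‖x - ⟪x,N⟫ • N‖ * ⟪e, y⟫ := by
      rw [← hvy]
      conv_lhs => rw [← hev]
      rw [real_inner_smul_left]
    have hxzb : ⟪x, z⟫ = ‖x - ⟪x,N⟫ • N‖ * ⟪e, z⟫ := by
      rw [← hvz]
      conv_lhs => rw [← hev]
      rw [real_inner_smul_left]
    have ha2 : ⟪e, y⟫^2 ≤ 1 := by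
      have h := abs_real_inner_le_norm e y
      rw [hea, hy, mul_one] at h
      have h2 := abs_le.mp h
      nlinarith [h2.1, h2.2]
    have hb2 : ⟪e, z⟫^2 ≤ 1 := by
      have h := abs_real_inner_le_norm e z
      rw [hea, hz, mul_one] at h
      have h2 := abs_le.mp h
      nlinarith [h2.1, h2.2]
    have hcs := geomCS e y z hea hy hz
    rw [hxya, hxzb] at hsum
    exact core _ _ _ _ ht0 ht1 ha2 hb2 hc1 hc2 hcs hsum

set_option maxHeartbeats 1000000 in
/-- If `Λ₀` is a nonempty compact subset of the equator `{y ∈ S^m : ⟨y,N⟩ = 0}`,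
`f : Λ₀ → ℝ` is `1`-Lipschitz, and `f⁺(x) = f⁻(x)` at some point `x ∈ S^m` of
the open upper hemisphere `⟨x,N⟩ > 0`, then `Λ₀` is purely lightlike: there is
`x₀ ∈ Λ₀` with `−x₀ ∈ Λ₀` and `f(x₀) = f(−x₀) + π`. -/
theorem stmt5 (m : ℕ) (N : EuclideanSpace ℝ (Fin (m + 1))) (hN : ‖N‖ = 1)
    (Λ₀ : Set (EuclideanSpace ℝ (Fin (m + 1))))
    (hsub : ∀ y ∈ Λ₀, ‖y‖ = 1 ∧ ⟪y, N⟫ = 0)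
    (hne : Λ₀.Nonempty) (hcpt : IsCompact Λ₀)
    (f : EuclideanSpace ℝ (Fin (m + 1)) → ℝ)
    (hf : ∀ y ∈ Λ₀, ∀ z ∈ Λ₀, |f y - f z| ≤ sphDist y z)
    (x : EuclideanSpace ℝ (Fin (m + 1))) (hx : ‖x‖ = 1) (hxN : 0 < ⟪x, N⟫)
    (heq : fplus Λ₀ f x = fminus Λ₀ f x) :
    ∃ x₀ ∈ Λ₀, -x₀ ∈ Λ₀ ∧ f x₀ = f (-x₀) + π := by
  -- continuity of f on Λ₀
  have hContf : ContinuousOn f Λ₀ := by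
    intro y₀ hy₀
    have hd : Filter.Tendsto (fun y => sphDist y y₀) (nhdsWithin y₀ Λ₀) (nhds 0) := by
      have hc : Continuous (fun y : EuclideanSpace ℝ (Fin (m+1)) => sphDist y y₀) := by
        unfold sphDist
        exact Real.continuous_arccos.comp (continuous_id.inner continuous_const)
      have h1 : sphDist y₀ y₀ = 0 := by
        unfold sphDist
        have : ⟪y₀, y₀⟫ = 1 := by
          rw [real_inner_self_eq_norm_sq, (hsub y₀ hy₀).1]; norm_num
        rw [this, Real.arccos_one]
      have h2 : Filter.Tendsto (fun y => sphDist y y₀) (nhds y₀) (nhds (sphDist y₀ y₀)) :=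
        hc.tendsto y₀
      rw [h1] at h2
      exact h2.mono_left nhdsWithin_le_nhds
    have hlow : Filter.Tendsto (fun y => f y₀ - sphDist y y₀) (nhdsWithin y₀ Λ₀)
        (nhds (f y₀)) := by
      simpa using hd.const_sub (f y₀)
    have hhigh : Filter.Tendsto (fun y => f y₀ + sphDist y y₀) (nhdsWithin y₀ Λ₀)
        (nhds (f y₀)) := by
      simpa using hd.const_add (f y₀)
    apply tendsto_of_tendsto_of_tendsto_of_le_of_le' hlow hhigh
    · filter_upwards [self_mem_nhdsWithin] with y hy
      have := (abs_le.mp (hf y hy y₀ hy₀)).1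
      linarith
    · filter_upwards [self_mem_nhdsWithin] with y hy
      have := (abs_le.mp (hf y hy y₀ hy₀)).2
      linarith
  have hContd : Continuous (fun y : EuclideanSpace ℝ (Fin (m+1)) => sphDist x y) := by
    unfold sphDist
    exact Real.continuous_arccos.comp (continuous_const.inner continuous_id)
  -- extrema
  obtain ⟨y₀, hy₀Λ, hy₀max⟩ := hcpt.exists_isMaxOn hne
    (hContf.sub hContd.continuousOn)
  obtain ⟨z₀, hz₀Λ, hz₀min⟩ := hcpt.exists_isMinOn hne
    (hContf.add hContd.continuousOn)
  have hfm : fminus Λ₀ f x ≤ f y₀ - sphDist x y₀ := by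
    apply csSup_le (hne.image _)
    rintro b ⟨y, hy, rfl⟩
    exact hy₀max hy
  have hfp : f z₀ + sphDist x z₀ ≤ fplus Λ₀ f x := by
    apply le_csInf (hne.image _)
    rintro b ⟨y, hy, rfl⟩
    exact hz₀min hy
  -- key chain
  have hchain : sphDist x y₀ + sphDist x z₀ ≤ f y₀ - f z₀ := by
    have := hfp.trans (heq.le.trans hfm)
    linarith
  have hlip := (abs_le.mp (hf y₀ hy₀Λ z₀ hz₀Λ)).2
  have hsum : arccos ⟪x, y₀⟫ + arccos ⟪x, z₀⟫ ≤ arccos ⟪y₀, z₀⟫ := by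
    have h1 : sphDist x y₀ + sphDist x z₀ ≤ sphDist y₀ z₀ := by linarith
    unfold sphDist at h1
    exact h1
  have hyz := geom N x y₀ z₀ hN hx (hsub y₀ hy₀Λ).1 (hsub z₀ hz₀Λ).1
    (hsub y₀ hy₀Λ).2 (hsub z₀ hz₀Λ).2 hxN hsum
  -- z₀ = -y₀
  have hz₀eq : z₀ = -y₀ := by
    have hns : ‖y₀ + z₀‖^2 = 0 := by
      rw [norm_add_sq_real, (hsub y₀ hy₀Λ).1, (hsub z₀ hz₀Λ).1, hyz]
      norm_num
    have : y₀ + z₀ = 0 := by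
      have := pow_eq_zero_iff (n := 2) (by norm_num) |>.mp hns
      exact norm_eq_zero.mp this
    linear_combination (norm := module) this
  -- the two distances sum to π
  have hd2 : sphDist x y₀ + sphDist x z₀ = π := by
    unfold sphDist
    rw [hz₀eq, inner_neg_right, Real.arccos_neg]
    ring
  have hdyz : sphDist y₀ z₀ = π := by
    unfold sphDist
    rw [hyz, Real.arccos_neg_one]
  refine ⟨y₀, hy₀Λ, ?_, ?_⟩
  · rw [← hz₀eq]; exact hz₀Λ
  · rw [← hz₀eq]
    rw [hdyz] at hlip
    rw [hd2] at hchain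
    linarith
end

section
/- Let Λ₀ be a nonempty compact subset of S^m and f : Λ₀ → ℝ a 1-Lipschitz function. Suppose there exists x₀ ∈ Λ₀ with −x₀ ∈ Λ₀ and f(x₀) = f(−x₀) + π (the purely lightlike case). Then for every x ∈ S^m one has f⁻(x) = f⁺(x) = f(x₀) − d(x₀, x) = f(−x₀) + d(−x₀, x); in particular the set {(θ,x) : f⁻(x) < θ < f⁺(x)} is empty. -/
open scoped RealInnerProductSpace
open Real

lemma arccos_antitone : Antitone Real.arccos := fun x y h => by
  unfold Real.arccos; linarith [Real.monotone_arcsin h]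

lemma sphDist_comm {m : ℕ} (x y : EuclideanSpace ℝ (Fin m)) :
    sphDist x y = sphDist y x := by
  unfold sphDist; rw [real_inner_comm]

lemma inner_le_one' {m : ℕ} {x y : EuclideanSpace ℝ (Fin m)}
    (hx : ‖x‖ = 1) (hy : ‖y‖ = 1) : |⟪x, y⟫| ≤ 1 := by
  have := abs_real_inner_le_norm x y
  rw [hx, hy] at this; simpa using this

lemma sphDist_neg_left {m : ℕ} (x y : EuclideanSpace ℝ (Fin m)) :
    sphDist (-x) y = π - sphDist x y := by
  unfold sphDist
  rw [inner_neg_left, Real.arccos_neg]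

lemma sphDist_neg_right {m : ℕ} (x y : EuclideanSpace ℝ (Fin m)) :
    sphDist x (-y) = π - sphDist x y := by
  unfold sphDist
  rw [inner_neg_right, Real.arccos_neg]

lemma sphDist_neg_self {m : ℕ} {x : EuclideanSpace ℝ (Fin m)} (hx : ‖x‖ = 1) :
    sphDist x (-x) = π := by
  unfold sphDist
  rw [inner_neg_right, real_inner_self_eq_norm_sq, hx]
  norm_num [Real.arccos_neg_one]

lemma sphDist_self {m : ℕ} {x : EuclideanSpace ℝ (Fin m)} (hx : ‖x‖ = 1) :
    sphDist x x = 0 := by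
  unfold sphDist
  rw [real_inner_self_eq_norm_sq, hx]
  norm_num [Real.arccos_one]

/-- Spherical triangle inequality for unit vectors. -/
lemma sphDist_triangle {m : ℕ} {x y z : EuclideanSpace ℝ (Fin m)}
    (hx : ‖x‖ = 1) (hy : ‖y‖ = 1) (hz : ‖z‖ = 1) :
    sphDist x y ≤ sphDist x z + sphDist z y := by
  set a := sphDist x z with ha
  set b := sphDist z y with hb
  have ha0 : 0 ≤ a := Real.arccos_nonneg _
  have hb0 : 0 ≤ b := Real.arccos_nonneg _
  rcases le_or_gt π (a + b) with h | h
  · exact le_trans (Real.arccos_le_pi _) h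
  have key : Real.cos (a + b) ≤ ⟪x, y⟫ := by
    have hca : Real.cos a = ⟪x, z⟫ := by
      rw [ha]; exact Real.cos_arccos (neg_le_of_abs_le (inner_le_one' hx hz))
        (le_of_abs_le (inner_le_one' hx hz))
    have hcb : Real.cos b = ⟪z, y⟫ := by
      rw [hb]; exact Real.cos_arccos (neg_le_of_abs_le (inner_le_one' hz hy))
        (le_of_abs_le (inner_le_one' hz hy))
    set u := x - (⟪x, z⟫ : ℝ) • z with hu
    set v := y - (⟪z, y⟫ : ℝ) • z with hv
    have hzz : ⟪z, z⟫ = (1 : ℝ) := by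
      rw [real_inner_self_eq_norm_sq, hz]; norm_num
    have huu : ⟪u, u⟫ = 1 - ⟪x, z⟫ ^ 2 := by
      simp only [hu, inner_sub_left, inner_sub_right, real_inner_smul_left,
        real_inner_smul_right, hzz]
      have hxx : ⟪x, x⟫ = (1 : ℝ) := by
        rw [real_inner_self_eq_norm_sq, hx]; norm_num
      rw [real_inner_comm z x, hxx]; ring
    have hvv : ⟪v, v⟫ = 1 - ⟪z, y⟫ ^ 2 := by
      simp only [hv, inner_sub_left, inner_sub_right, real_inner_smul_left,
        real_inner_smul_right, hzz]
      have hyy : ⟪y, y⟫ = (1 : ℝ) := by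
        rw [real_inner_self_eq_norm_sq, hy]; norm_num
      rw [real_inner_comm z y, hyy]; ring
    have huv : ⟪u, v⟫ = ⟪x, y⟫ - ⟪x, z⟫ * ⟪z, y⟫ := by
      simp only [hu, hv, inner_sub_left, inner_sub_right, real_inner_smul_left,
        real_inner_smul_right, hzz]
      rw [real_inner_comm z x]; ring
    have hnu : ‖u‖ = Real.sqrt (1 - ⟪x, z⟫ ^ 2) := by
      rw [← Real.sqrt_sq (norm_nonneg u), ← real_inner_self_eq_norm_sq, huu]
    have hnv : ‖v‖ = Real.sqrt (1 - ⟪z, y⟫ ^ 2) := by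
      rw [← Real.sqrt_sq (norm_nonneg v), ← real_inner_self_eq_norm_sq, hvv]
    have hcs : -(‖u‖ * ‖v‖) ≤ ⟪u, v⟫ :=
      neg_le_of_abs_le (abs_real_inner_le_norm u v)
    have hsa : Real.sin a = Real.sqrt (1 - ⟪x, z⟫ ^ 2) := Real.sin_arccos _
    have hsb : Real.sin b = Real.sqrt (1 - ⟪z, y⟫ ^ 2) := Real.sin_arccos _
    have hcos : Real.cos (a + b) = ⟪x, z⟫ * ⟪z, y⟫ - Real.sin a * Real.sin b := by
      rw [Real.cos_add, hca, hcb]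
    rw [hcos, hsa, hsb, ← hnu, ← hnv]
    linarith [hcs, huv ▸ hcs]
  calc sphDist x y = Real.arccos ⟪x, y⟫ := rfl
    _ ≤ Real.arccos (Real.cos (a + b)) := arccos_antitone key
    _ = a + b := Real.arccos_cos (by linarith) h.le

/-- In the purely lightlike case (`x₀, −x₀ ∈ Λ₀` with `f(x₀) = f(−x₀) + π`),
one has `f⁻ = f⁺ = f(x₀) − d(x₀,·) = f(−x₀) + d(−x₀,·)` on `S^m`; in particular
the region `{(θ,x) : f⁻(x) < θ < f⁺(x)}` is empty. -/
theorem stmt6 (m : ℕ) (Λ₀ : Set (EuclideanSpace ℝ (Fin (m + 1))))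
    (hsub : ∀ y ∈ Λ₀, ‖y‖ = 1) (hne : Λ₀.Nonempty) (hcpt : IsCompact Λ₀)
    (f : EuclideanSpace ℝ (Fin (m + 1)) → ℝ)
    (hf : ∀ y ∈ Λ₀, ∀ z ∈ Λ₀, |f y - f z| ≤ sphDist y z)
    (x₀ : EuclideanSpace ℝ (Fin (m + 1))) (hx₀ : x₀ ∈ Λ₀) (hx₀' : -x₀ ∈ Λ₀)
    (hl : f x₀ = f (-x₀) + π) :
    (∀ x : EuclideanSpace ℝ (Fin (m + 1)), ‖x‖ = 1 →
      fminus Λ₀ f x = f x₀ - sphDist x₀ x ∧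
      fplus Λ₀ f x = f x₀ - sphDist x₀ x ∧
      fplus Λ₀ f x = f (-x₀) + sphDist (-x₀) x) ∧
    {p : ℝ × EuclideanSpace ℝ (Fin (m + 1)) |
      ‖p.2‖ = 1 ∧ fminus Λ₀ f p.2 < p.1 ∧ p.1 < fplus Λ₀ f p.2} = ∅ := by
  have hx₀u : ‖x₀‖ = 1 := hsub x₀ hx₀
  -- key rigidity: f y = f x₀ - d(x₀,y) for all y ∈ Λ₀
  have hkey : ∀ y ∈ Λ₀, f y = f x₀ - sphDist x₀ y := by
    intro y hy
    have h1 : f x₀ - f y ≤ sphDist x₀ y := le_of_abs_le (hf x₀ hx₀ y hy)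
    have h2 : f y - f (-x₀) ≤ sphDist y (-x₀) := le_of_abs_le (hf y hy (-x₀) hx₀')
    rw [sphDist_neg_right, sphDist_comm y x₀] at h2
    linarith
  have hmain : ∀ x : EuclideanSpace ℝ (Fin (m + 1)), ‖x‖ = 1 →
      fminus Λ₀ f x = f x₀ - sphDist x₀ x ∧
      fplus Λ₀ f x = f x₀ - sphDist x₀ x ∧
      fplus Λ₀ f x = f (-x₀) + sphDist (-x₀) x := by
    intro x hxu
    have hd : sphDist (-x₀) x = π - sphDist x₀ x := sphDist_neg_left x₀ x
    have heq3 : f x₀ - sphDist x₀ x = f (-x₀) + sphDist (-x₀) x := by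
      rw [hd, hl]; ring
    have hub : ∀ z ∈ (fun y => f y - sphDist x y) '' Λ₀, z ≤ f x₀ - sphDist x₀ x := by
      rintro _ ⟨y, hy, rfl⟩
      have htri : sphDist x₀ x ≤ sphDist x₀ y + sphDist y x :=
        sphDist_triangle hx₀u hxu (hsub y hy)
      rw [sphDist_comm y x] at htri
      have := hkey y hy
      simp only
      linarith
    have hlb : ∀ z ∈ (fun y => f y + sphDist x y) '' Λ₀, f x₀ - sphDist x₀ x ≤ z := by
      rintro _ ⟨y, hy, rfl⟩
      have htri : sphDist x₀ y ≤ sphDist x₀ x + sphDist x y :=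
        sphDist_triangle hx₀u (hsub y hy) hxu
      have := hkey y hy
      simp only
      linarith
    have hmem1 : f x₀ - sphDist x₀ x ∈ (fun y => f y - sphDist x y) '' Λ₀ :=
      ⟨x₀, hx₀, by simp only; rw [sphDist_comm x x₀]⟩
    have hmem2 : f x₀ - sphDist x₀ x ∈ (fun y => f y + sphDist x y) '' Λ₀ := by
      refine ⟨-x₀, hx₀', ?_⟩
      simp only
      rw [sphDist_neg_right x x₀, sphDist_comm x x₀, hl]
      ring
    have hm : fminus Λ₀ f x = f x₀ - sphDist x₀ x :=
      le_antisymm (csSup_le (hne.image _) hub)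
        (le_csSup ⟨f x₀ - sphDist x₀ x, hub⟩ hmem1)
    have hp : fplus Λ₀ f x = f x₀ - sphDist x₀ x :=
      le_antisymm (csInf_le ⟨f x₀ - sphDist x₀ x, hlb⟩ hmem2)
        (le_csInf (hne.image _) hlb)
    exact ⟨hm, hp, hp.trans heq3⟩
  refine ⟨hmain, ?_⟩
  ext ⟨θ, x⟩
  simp only [Set.mem_setOf_eq, Set.mem_empty_iff_false, iff_false, not_and]
  intro hxu h1 h2
  obtain ⟨hm, hp, -⟩ := hmain x hxu
  rw [hm] at h1; rw [hp] at h2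
  linarith
end
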